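/- Let σ : ℝⁿ → ℝ be convex and Lipschitz, H continuous in (t,p), u(t,x) = max_q {⟨x,q⟩ - σ*(q) - ∫₀ᵗ H(τ,q)dτ}, and suppose at (t₀,x₀) ∈ (0,T) × ℝⁿ the set of maximizers ℓ(t₀,x₀) is a singleton {p}. Then u is (totally) differentiable at (t₀,x₀) with ∇ₓu(t₀,x₀) = p and ∂ₜu(t₀,x₀) = -H(t₀,p). -/

import Mathlib

local notation "⟪" x ", " y "⟫" => @inner ℝ _ _ x y

/-- The Fenchel (Legendre) conjugate of `σ`, with values in `EReal`. -/
noncomputable def fenchelConj {n : ℕ} (σ : EuclideanSpace ℝ (Fin n) → ℝ)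
    (q : EuclideanSpace ℝ (Fin n)) : EReal :=
  ⨆ x : EuclideanSpace ℝ (Fin n), ((⟪x, q⟫ - σ x : ℝ) : EReal)

lemma conj_lb {n : ℕ} (σ : EuclideanSpace ℝ (Fin n) → ℝ) (q : EuclideanSpace ℝ (Fin n)) :
    ((-σ 0 : ℝ) : EReal) ≤ fenchelConj σ q := by
  have := le_iSup (fun x : EuclideanSpace ℝ (Fin n) => ((⟪x, q⟫ - σ x : ℝ) : EReal)) 0
  simpa [fenchelConj] using this

lemma conj_ne_bot {n : ℕ} (σ : EuclideanSpace ℝ (Fin n) → ℝ) (q : EuclideanSpace ℝ (Fin n)) :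
    fenchelConj σ q ≠ ⊥ :=
  fun h => absurd (h ▸ conj_lb σ q) (by simp)

lemma conj_top' {n : ℕ} {L : NNReal} {σ : EuclideanSpace ℝ (Fin n) → ℝ}
    (hlip : LipschitzWith L σ) {q : EuclideanSpace ℝ (Fin n)} (h : (L : ℝ) < ‖q‖) :
    fenchelConj σ q = ⊤ := by
  rw [fenchelConj, iSup_eq_top]
  intro b hb
  obtain ⟨r, hbr, -⟩ := EReal.exists_between_coe_real hb
  have hq0 : 0 < ‖q‖ := lt_of_le_of_lt L.coe_nonneg h
  set s : ℝ := (|r| + |σ 0| + 1) / (‖q‖ - (L : ℝ)) with hs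
  have hden : 0 < ‖q‖ - (L : ℝ) := by linarith
  have hsnn : 0 ≤ s := div_nonneg (by positivity) hden.le
  refine ⟨(s * ‖q‖⁻¹) • q, ?_⟩
  have hiq : ⟪(s * ‖q‖⁻¹) • q, q⟫ = s * ‖q‖ := by
    rw [real_inner_smul_left, real_inner_self_eq_norm_sq]
    field_simp
  have hσ : σ ((s * ‖q‖⁻¹) • q) ≤ σ 0 + (L : ℝ) * s := by
    have h1 := hlip.dist_le_mul ((s * ‖q‖⁻¹) • q) 0
    rw [dist_zero_right] at h1
    have hn : ‖(s * ‖q‖⁻¹) • q‖ = s := by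
      rw [norm_smul]
      simp only [Real.norm_eq_abs, abs_of_nonneg (mul_nonneg hsnn (inv_nonneg.2 hq0.le))]
      field_simp
    rw [hn, Real.dist_eq] at h1
    have := (abs_le.1 h1).2
    linarith
  refine lt_of_lt_of_le hbr ?_
  rw [EReal.coe_le_coe_iff, hiq]
  have hsv : s * (‖q‖ - (L : ℝ)) = |r| + |σ 0| + 1 := by
    rw [hs, div_mul_cancel₀ _ hden.ne']
  nlinarith [le_abs_self r, le_abs_self (σ 0), neg_abs_le (σ 0)]

/-- The Hopf functional `φ(t,x,q) = ⟨x,q⟩ - σ*(q) - ∫₀ᵗ H(τ,q) dτ` (`EReal`-valued). -/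
noncomputable def hopfPhi {n : ℕ} (σ : EuclideanSpace ℝ (Fin n) → ℝ)
    (H : ℝ → EuclideanSpace ℝ (Fin n) → ℝ) (t : ℝ)
    (x q : EuclideanSpace ℝ (Fin n)) : EReal :=
  ((⟪x, q⟫ - ∫ τ in (0:ℝ)..t, H τ q : ℝ) : EReal) - fenchelConj σ q

lemma phi_real {n : ℕ} {σ : EuclideanSpace ℝ (Fin n) → ℝ}
    {H : ℝ → EuclideanSpace ℝ (Fin n) → ℝ} {t : ℝ} {x q : EuclideanSpace ℝ (Fin n)}
    {s : ℝ} (hs : fenchelConj σ q = (s : ℝ)) :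
    hopfPhi σ H t x q = (((⟪x, q⟫ - ∫ τ in (0:ℝ)..t, H τ q) - s : ℝ) : EReal) := by
  rw [hopfPhi, hs, ← EReal.coe_sub]

lemma maximizer_spec {n : ℕ} {L : NNReal} {σ : EuclideanSpace ℝ (Fin n) → ℝ}
    (hlip : LipschitzWith L σ) {H : ℝ → EuclideanSpace ℝ (Fin n) → ℝ}
    {t : ℝ} {x q : EuclideanSpace ℝ (Fin n)} {v : ℝ}
    (hval : IsGreatest (Set.range (hopfPhi σ H t x)) ((v : ℝ) : EReal))
    (hq : ∀ q', hopfPhi σ H t x q' ≤ hopfPhi σ H t x q) :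
    ∃ s : ℝ, fenchelConj σ q = (s : ℝ) ∧
      v = (⟪x, q⟫ - ∫ τ in (0:ℝ)..t, H τ q) - s ∧ ‖q‖ ≤ (L : ℝ) := by
  obtain ⟨q₁, hq₁⟩ := hval.1
  have hqv : hopfPhi σ H t x q = ((v : ℝ) : EReal) :=
    le_antisymm (hval.2 ⟨q, rfl⟩) (hq₁ ▸ hq q₁)
  have hne : fenchelConj σ q ≠ ⊤ := by
    intro htop
    rw [hopfPhi, htop] at hqv
    simp at hqv
  have hs : fenchelConj σ q = ((fenchelConj σ q).toReal : ℝ) :=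
    (EReal.coe_toReal hne (conj_ne_bot σ q)).symm
  refine ⟨(fenchelConj σ q).toReal, hs, ?_, ?_⟩
  · have := (phi_real (H := H) (t := t) (x := x) hs) ▸ hqv
    exact (EReal.coe_eq_coe_iff.1 this).symm
  · by_contra hL
    exact hne (conj_top' hlip (lt_of_not_ge hL))

noncomputable def hopfG {n : ℕ} (H : ℝ → EuclideanSpace ℝ (Fin n) → ℝ) (t₀ : ℝ)
    (x₀ q : EuclideanSpace ℝ (Fin n)) : ℝ :=
  ⟪x₀, q⟫ - ∫ τ in (0:ℝ)..t₀, H τ q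

lemma hopfG_cont {n : ℕ} {H : ℝ → EuclideanSpace ℝ (Fin n) → ℝ}
    (hH : Continuous (fun p : ℝ × EuclideanSpace ℝ (Fin n) => H p.1 p.2))
    (t₀ : ℝ) (x₀ : EuclideanSpace ℝ (Fin n)) : Continuous (hopfG H t₀ x₀) := by
  apply Continuous.sub
  · exact continuous_const.inner continuous_id
  · refine intervalIntegral.continuous_parametric_intervalIntegral_of_continuous' ?_ (0:ℝ) t₀
    exact hH.comp continuous_swap

lemma hopfPhi_eq_G {n : ℕ} (σ : EuclideanSpace ℝ (Fin n) → ℝ)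
    (H : ℝ → EuclideanSpace ℝ (Fin n) → ℝ) (t₀ : ℝ) (x₀ q : EuclideanSpace ℝ (Fin n)) :
    hopfPhi σ H t₀ x₀ q = ((hopfG H t₀ x₀ q : ℝ) : EReal) - fenchelConj σ q := rfl

lemma sup_away {n : ℕ} {σ : EuclideanSpace ℝ (Fin n) → ℝ}
    {H : ℝ → EuclideanSpace ℝ (Fin n) → ℝ}
    (hH : Continuous (fun p : ℝ × EuclideanSpace ℝ (Fin n) => H p.1 p.2))
    {t₀ : ℝ} {x₀ p : EuclideanSpace ℝ (Fin n)} {R ε u₀ : ℝ} (hε : 0 < ε)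
    (hlt : ∀ q : EuclideanSpace ℝ (Fin n), ‖q‖ ≤ R → ε ≤ ‖q - p‖ →
      hopfPhi σ H t₀ x₀ q < ((u₀ : ℝ) : EReal)) :
    ∃ c : ℝ, c < u₀ ∧ ∀ q, ‖q‖ ≤ R → ε ≤ ‖q - p‖ →
      hopfPhi σ H t₀ x₀ q ≤ ((c : ℝ) : EReal) := by
  classical
  set K : Set (EuclideanSpace ℝ (Fin n)) := {q | ‖q‖ ≤ R ∧ ε ≤ ‖q - p‖} with hKdef
  have hK : IsCompact K := by
    have : K = Metric.closedBall (0 : EuclideanSpace ℝ (Fin n)) R ∩ {q | ε ≤ ‖q - p‖} := by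
      ext q; simp [hKdef, Metric.mem_closedBall, dist_zero_right]
    rw [this]
    exact (isCompact_closedBall (0 : EuclideanSpace ℝ (Fin n)) R).inter_right
      (isClosed_le continuous_const (continuous_id.sub continuous_const).norm)
  have hg : Continuous (hopfG H t₀ x₀) := hopfG_cont hH t₀ x₀
  have hphig := hopfPhi_eq_G σ H t₀ x₀
  -- key: reduce `φ q ≤ c` to a lower bound on the conjugate
  have key : ∀ (c : ℝ) (q : EuclideanSpace ℝ (Fin n)), ((hopfG H t₀ x₀ q - c : ℝ) : EReal) ≤ fenchelConj σ q →
      hopfPhi σ H t₀ x₀ q ≤ ((c : ℝ) : EReal) := by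
    intro c q hle
    rw [hphig]
    rcases eq_or_ne (fenchelConj σ q) ⊤ with htop | hne
    · rw [htop]; simp
    · obtain ⟨s, hs⟩ : ∃ s : ℝ, (s : EReal) = fenchelConj σ q :=
        ⟨_, EReal.coe_toReal hne (conj_ne_bot σ q)⟩
      rw [← hs, EReal.coe_le_coe_iff] at hle
      rw [← hs, ← EReal.coe_sub, EReal.coe_le_coe_iff]
      linarith
  -- lower semicontinuity of the conjugate
  have lsc : ∀ (b : ℝ) (q₀ : EuclideanSpace ℝ (Fin n)), ((b : ℝ) : EReal) < fenchelConj σ q₀ →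
      ∀ᶠ q in nhds q₀, ((b : ℝ) : EReal) < fenchelConj σ q := by
    intro b q₀ hb
    rw [fenchelConj, lt_iSup_iff] at hb
    obtain ⟨x, hx⟩ := hb
    rw [EReal.coe_lt_coe_iff] at hx
    have hcont : Continuous fun q : EuclideanSpace ℝ (Fin n) => ⟪x, q⟫ - σ x :=
      (continuous_const.inner continuous_id).sub continuous_const
    filter_upwards [(isOpen_lt continuous_const hcont).mem_nhds hx] with q hq
    exact lt_of_lt_of_le (EReal.coe_lt_coe_iff.2 hq)
      (le_iSup (fun x : EuclideanSpace ℝ (Fin n) => ((⟪x, q⟫ - σ x : ℝ) : EReal)) x)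
  -- a good neighborhood around each point of K
  have cover : ∀ q₀ ∈ K, ∃ c : ℝ, c < u₀ ∧
      {q | hopfPhi σ H t₀ x₀ q ≤ ((c : ℝ) : EReal)} ∈ nhds q₀ := by
    intro q₀ hq₀
    have hφ := hlt q₀ hq₀.1 hq₀.2
    have main : ∃ c : ℝ, c < u₀ ∧ ∃ b r : ℝ, ((b : ℝ) : EReal) < fenchelConj σ q₀ ∧
        hopfG H t₀ x₀ q₀ < r ∧ ∀ gq : ℝ, gq < r → gq - c ≤ b := by
      rcases eq_or_ne (fenchelConj σ q₀) ⊤ with htop | hne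
      · refine ⟨u₀ - 1, by linarith, hopfG H t₀ x₀ q₀ + 1 - (u₀ - 1), hopfG H t₀ x₀ q₀ + 1,
          htop ▸ EReal.coe_lt_top _, by linarith, fun gq hgq => by linarith⟩
      · obtain ⟨s, hs⟩ : ∃ s : ℝ, (s : EReal) = fenchelConj σ q₀ :=
          ⟨_, EReal.coe_toReal hne (conj_ne_bot σ q₀)⟩
        have hreal : hopfG H t₀ x₀ q₀ - s < u₀ := by
          rw [hphig, ← hs, ← EReal.coe_sub, EReal.coe_lt_coe_iff] at hφ
          exact hφ
        have hη : 0 < (u₀ - (hopfG H t₀ x₀ q₀ - s)) / 3 := by linarith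
        exact ⟨hopfG H t₀ x₀ q₀ - s + 2 * ((u₀ - (hopfG H t₀ x₀ q₀ - s)) / 3), by linarith,
          s - (u₀ - (hopfG H t₀ x₀ q₀ - s)) / 3, hopfG H t₀ x₀ q₀ + (u₀ - (hopfG H t₀ x₀ q₀ - s)) / 3,
          by rw [← hs]; exact_mod_cast (by linarith : s - (u₀ - (hopfG H t₀ x₀ q₀ - s)) / 3 < s),
          by linarith, fun gq hgq => by linarith⟩
    obtain ⟨c, hc, b, r, hb, hr, hd⟩ := main
    refine ⟨c, hc, ?_⟩
    filter_upwards [lsc b q₀ hb, (isOpen_lt hg continuous_const).mem_nhds hr] with q h1 h2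
    exact key c q (le_trans (EReal.coe_le_coe_iff.2 (hd _ h2)) h1.le)
  -- extract a finite subcover
  have cover' : ∀ q₀ : EuclideanSpace ℝ (Fin n), ∃ c : ℝ, q₀ ∈ K → c < u₀ ∧
      {q | hopfPhi σ H t₀ x₀ q ≤ ((c : ℝ) : EReal)} ∈ nhds q₀ := by
    intro q₀
    by_cases h : q₀ ∈ K
    · obtain ⟨c, hc⟩ := cover q₀ h; exact ⟨c, fun _ => hc⟩
    · exact ⟨0, fun h' => absurd h' h⟩
  choose c hc using cover'
  obtain ⟨t, htK, hcov⟩ := hK.elim_nhds_subcover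
    (fun q₀ => {q | hopfPhi σ H t₀ x₀ q ≤ ((c q₀ : ℝ) : EReal)})
    (fun q₀ hq₀ => (hc q₀ hq₀).2)
  refine ⟨t.fold max (u₀ - 1) c, ?_, ?_⟩
  · rw [Finset.fold_max_lt]
    exact ⟨by linarith, fun x hx => (hc x (htK x hx)).1⟩
  · intro q hq1 hq2
    obtain ⟨x, hxt, hx⟩ := Set.mem_iUnion₂.1 (hcov ⟨hq1, hq2⟩)
    refine le_trans hx (EReal.coe_le_coe_iff.2 ?_)
    exact (Finset.le_fold_max _).2 (Or.inr ⟨x, hxt, le_refl _⟩)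

/-- The set `ℓ(t,x)` of maximizers over `q ∈ ℝⁿ` of `φ(t,x,·)`. -/
def hopfArgmax {n : ℕ} (σ : EuclideanSpace ℝ (Fin n) → ℝ)
    (H : ℝ → EuclideanSpace ℝ (Fin n) → ℝ) (t : ℝ)
    (x : EuclideanSpace ℝ (Fin n)) : Set (EuclideanSpace ℝ (Fin n)) :=
  {q | ∀ q', hopfPhi σ H t x q' ≤ hopfPhi σ H t x q}

set_option maxHeartbeats 1000000 in
theorem stmt6 {n : ℕ} (T : ℝ) (hT : 0 < T) (L : NNReal)
    (σ : EuclideanSpace ℝ (Fin n) → ℝ)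
    (hconv : ConvexOn ℝ Set.univ σ) (hlip : LipschitzWith L σ)
    (H : ℝ → EuclideanSpace ℝ (Fin n) → ℝ)
    (hH : Continuous (fun p : ℝ × EuclideanSpace ℝ (Fin n) => H p.1 p.2))
    (u : ℝ × EuclideanSpace ℝ (Fin n) → ℝ)
    (hu : ∀ t ∈ Set.Icc (0:ℝ) T, ∀ x,
      IsGreatest (Set.range (hopfPhi σ H t x)) ((u (t, x) : ℝ) : EReal))
    (t₀ : ℝ) (x₀ p : EuclideanSpace ℝ (Fin n)) (ht₀ : t₀ ∈ Set.Ioo 0 T)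
    (hsingle : hopfArgmax σ H t₀ x₀ = {p}) :
    HasFDerivAt u
      ((-(H t₀ p)) • (ContinuousLinearMap.fst ℝ ℝ (EuclideanSpace ℝ (Fin n))) +
        (innerSL ℝ p).comp (ContinuousLinearMap.snd ℝ ℝ (EuclideanSpace ℝ (Fin n))))
      (t₀, x₀) := by
  classical
  have hHq : ∀ q : EuclideanSpace ℝ (Fin n), Continuous fun τ => H τ q :=
    fun q => hH.comp (continuous_id.prodMk continuous_const)
  have hInt : ∀ (q : EuclideanSpace ℝ (Fin n)) (a b : ℝ),
      IntervalIntegrable (fun τ => H τ q) MeasureTheory.volume a b :=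
    fun q a b => (hHq q).intervalIntegrable a b
  have hFsub : ∀ (q : EuclideanSpace ℝ (Fin n)) (t : ℝ),
      (∫ τ in (0:ℝ)..t, H τ q) - (∫ τ in (0:ℝ)..t₀, H τ q) = ∫ τ in t₀..t, H τ q :=
    fun q t => intervalIntegral.integral_interval_sub_left (hInt q 0 t) (hInt q 0 t₀)
  have ht₀T : t₀ ∈ Set.Icc (0:ℝ) T := ⟨ht₀.1.le, ht₀.2.le⟩
  have hu₀ := hu t₀ ht₀T x₀
  have hpmax : ∀ q', hopfPhi σ H t₀ x₀ q' ≤ hopfPhi σ H t₀ x₀ p := by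
    have hp : p ∈ hopfArgmax σ H t₀ x₀ := by rw [hsingle]; exact rfl
    exact hp
  obtain ⟨sp, hsp, hu₀val, hpL⟩ := maximizer_spec hlip hu₀ hpmax
  -- a bound for H on the relevant compact set
  obtain ⟨M, hM⟩ : ∃ M : ℝ, ∀ z ∈ (Set.Icc (0:ℝ) T) ×ˢ
      (Metric.closedBall (0 : EuclideanSpace ℝ (Fin n)) (L : ℝ)), |H z.1 z.2| ≤ M := by
    have hcpt : IsCompact ((Set.Icc (0:ℝ) T) ×ˢ
        (Metric.closedBall (0 : EuclideanSpace ℝ (Fin n)) (L : ℝ))) :=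
      (isCompact_Icc).prod (isCompact_closedBall _ _)
    obtain ⟨M, hM⟩ := hcpt.exists_bound_of_continuousOn hH.continuousOn
    exact ⟨M, fun z hz => by simpa [Real.norm_eq_abs] using hM z hz⟩
  have hM' : ∀ τ ∈ Set.Icc (0:ℝ) T, ∀ q : EuclideanSpace ℝ (Fin n), ‖q‖ ≤ (L : ℝ) →
      |H τ q| ≤ max M 0 := by
    intro τ hτ q hq
    refine le_trans (hM (τ, q) ⟨hτ, ?_⟩) (le_max_left _ _)
    simpa [Metric.mem_closedBall, dist_zero_right] using hq
  have hMnn : (0:ℝ) ≤ max M 0 := le_max_right _ _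
  -- integral bound
  have hIb : ∀ (q : EuclideanSpace ℝ (Fin n)) (t : ℝ), t ∈ Set.Icc (0:ℝ) T → ‖q‖ ≤ (L : ℝ) →
      |∫ τ in t₀..t, H τ q| ≤ (max M 0) * |t - t₀| := by
    intro q t ht hq
    have := intervalIntegral.norm_integral_le_of_norm_le_const (C := max M 0)
      (f := fun τ => H τ q) (a := t₀) (b := t) ?_
    · simpa [Real.norm_eq_abs] using this
    · intro τ hτ
      have h1 : min t₀ t < τ := hτ.1
      have h2 : τ ≤ max t₀ t := hτ.2
      have h3 : (0:ℝ) ≤ min t₀ t := le_min ht₀T.1 ht.1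
      have h4 : max t₀ t ≤ T := max_le ht₀T.2 ht.2
      rw [Real.norm_eq_abs]
      exact hM' τ ⟨by linarith, by linarith⟩ q hq
  -- convergence of maximizers
  have hC : ∀ ε > (0:ℝ), ∃ δ > (0:ℝ), ∀ (t : ℝ) (x q : EuclideanSpace ℝ (Fin n)),
      |t - t₀| < δ → ‖x - x₀‖ < δ → t ∈ Set.Icc (0:ℝ) T →
      (∀ q', hopfPhi σ H t x q' ≤ hopfPhi σ H t x q) → ‖q - p‖ < ε := by
    intro ε hε
    have hlt : ∀ q : EuclideanSpace ℝ (Fin n), ‖q‖ ≤ (L : ℝ) → ε ≤ ‖q - p‖ →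
        hopfPhi σ H t₀ x₀ q < ((u (t₀, x₀) : ℝ) : EReal) := by
      intro q hqL hqp
      have hqne : q ∉ hopfArgmax σ H t₀ x₀ := by
        rw [hsingle, Set.mem_singleton_iff]
        intro h
        rw [h] at hqp
        simp at hqp
        linarith
      obtain ⟨q', hq'⟩ := not_forall.1 hqne
      exact lt_of_lt_of_le (not_le.1 hq') (hu₀.2 ⟨q', rfl⟩)
    obtain ⟨c, hc, hcb⟩ := sup_away hH hε hlt
    have hγ : 0 < u (t₀, x₀) - c := by linarith
    refine ⟨(u (t₀, x₀) - c) / (2 * ((L:ℝ) + max M 0 + 1)), by positivity, ?_⟩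
    intro t x q ht hx htT hqmax
    by_contra hqp
    push_neg at hqp
    obtain ⟨s, hs, hval, hqL⟩ := maximizer_spec hlip (hu t htT x) hqmax
    -- upper bound for u (t,x) through q
    have h1 : ⟪x₀, q⟫ - (∫ τ in (0:ℝ)..t₀, H τ q) - s ≤ c := by
      have := hcb q hqL hqp
      rw [phi_real hs, EReal.coe_le_coe_iff] at this
      exact this
    -- lower bound for u (t,x) through p
    have h2 : ⟪x, p⟫ - (∫ τ in (0:ℝ)..t, H τ p) - sp ≤ u (t, x) := by
      have := (hu t htT x).2 ⟨p, rfl⟩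
      rw [phi_real hsp, EReal.coe_le_coe_iff] at this
      exact this
    have hip : |⟪x - x₀, p⟫| ≤ ‖x - x₀‖ * (L:ℝ) :=
      le_trans (abs_real_inner_le_norm _ _) (mul_le_mul_of_nonneg_left hpL (norm_nonneg _))
    have hiq : |⟪x - x₀, q⟫| ≤ ‖x - x₀‖ * (L:ℝ) :=
      le_trans (abs_real_inner_le_norm _ _) (mul_le_mul_of_nonneg_left hqL (norm_nonneg _))
    have hsubp : ⟪x, p⟫ - ⟪x₀, p⟫ = ⟪x - x₀, p⟫ := (inner_sub_left x x₀ p).symm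
    have hsubq : ⟪x, q⟫ - ⟪x₀, q⟫ = ⟪x - x₀, q⟫ := (inner_sub_left x x₀ q).symm
    have hFp := hFsub p t
    have hFq := hFsub q t
    have hIp := hIb p t htT hpL
    have hIq := hIb q t htT hqL
    set δ := (u (t₀, x₀) - c) / (2 * ((L:ℝ) + max M 0 + 1)) with hδ
    have hδval : δ * (2 * ((L:ℝ) + max M 0 + 1)) = u (t₀, x₀) - c := by
      rw [hδ]; field_simp
    have hLnn : (0:ℝ) ≤ (L:ℝ) := L.coe_nonneg
    have hxd : ‖x - x₀‖ ≤ δ := hx.le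
    have htd : |t - t₀| ≤ δ := ht.le
    have hdnn : 0 ≤ δ := by positivity
    -- combine
    have e1 : u (t, x) ≤ c + δ * (L:ℝ) + (max M 0) * δ := by
      have b1 : |⟪x - x₀, q⟫| ≤ δ * (L:ℝ) :=
        le_trans hiq (mul_le_mul_of_nonneg_right hxd hLnn)
      have b2 : |∫ τ in t₀..t, H τ q| ≤ (max M 0) * δ :=
        le_trans hIq (mul_le_mul_of_nonneg_left htd hMnn)
      rw [hval]
      have := abs_le.1 b1
      have := abs_le.1 b2
      nlinarith [hFq, h1, hsubq]
    have e2 : u (t₀, x₀) - δ * (L:ℝ) - (max M 0) * δ ≤ u (t, x) := by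
      have b1 : |⟪x - x₀, p⟫| ≤ δ * (L:ℝ) :=
        le_trans hip (mul_le_mul_of_nonneg_right hxd hLnn)
      have b2 : |∫ τ in t₀..t, H τ p| ≤ (max M 0) * δ :=
        le_trans hIp (mul_le_mul_of_nonneg_left htd hMnn)
      have := abs_le.1 b1
      have := abs_le.1 b2
      nlinarith [hFp, h2, hsubp, hu₀val]
    nlinarith [hδval, mul_nonneg hdnn hLnn, mul_nonneg hMnn hdnn]
  -- pass to the little-o characterization
  rw [hasFDerivAt_iff_isLittleO, Asymptotics.isLittleO_iff]
  intro ε hε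
  -- continuity of H at (t₀, p)
  obtain ⟨δ₁, hδ₁, hH1⟩ := Metric.continuous_iff.1 hH (t₀, p) (ε/2) (by positivity)
  have hH2 : ∀ (τ : ℝ) (q : EuclideanSpace ℝ (Fin n)), |τ - t₀| < δ₁ → ‖q - p‖ < δ₁ →
      |H τ q - H t₀ p| ≤ ε/2 := by
    intro τ q h1 h2
    have := hH1 (τ, q) (by
      rw [Prod.dist_eq]
      exact max_lt (by rwa [Real.dist_eq]) (by rwa [dist_eq_norm]))
    rw [Real.dist_eq] at this
    exact this.le
  obtain ⟨δ₂, hδ₂, hC2⟩ := hC (min δ₁ (ε/2)) (by positivity)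
  have hδpos : 0 < min δ₂ (min δ₁ (min t₀ (T - t₀))) :=
    lt_min hδ₂ (lt_min hδ₁ (lt_min ht₀.1 (by linarith [ht₀.2])))
  rw [Metric.eventually_nhds_iff]
  refine ⟨min δ₂ (min δ₁ (min t₀ (T - t₀))), hδpos, ?_⟩
  rintro ⟨t, x⟩ hd
  rw [Prod.dist_eq, max_lt_iff] at hd
  have ht : |t - t₀| < min δ₂ (min δ₁ (min t₀ (T - t₀))) := by
    rw [← Real.dist_eq]; exact hd.1
  have hx : ‖x - x₀‖ < min δ₂ (min δ₁ (min t₀ (T - t₀))) := by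
    rw [← dist_eq_norm]; exact hd.2
  have htδ₂ : |t - t₀| < δ₂ := lt_of_lt_of_le ht (min_le_left _ _)
  have hxδ₂ : ‖x - x₀‖ < δ₂ := lt_of_lt_of_le hx (min_le_left _ _)
  have htδ₁ : |t - t₀| < δ₁ := lt_of_lt_of_le ht (le_trans (min_le_right _ _) (min_le_left _ _))
  have habs := abs_lt.1 (lt_of_lt_of_le ht (le_trans (min_le_right _ _) (min_le_right _ _)))
  have htT : t ∈ Set.Icc (0:ℝ) T := by
    have hm1 : min t₀ (T - t₀) ≤ t₀ := min_le_left _ _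
    have hm2 : min t₀ (T - t₀) ≤ T - t₀ := min_le_right _ _
    constructor <;> [linarith [habs.1]; linarith [habs.2]]
  -- maximizer at (t, x)
  have hutx := hu t htT x
  obtain ⟨q, hq⟩ := hutx.1
  have hqmax : ∀ q', hopfPhi σ H t x q' ≤ hopfPhi σ H t x q :=
    fun q' => (hutx.2 ⟨q', rfl⟩).trans hq.ge
  obtain ⟨s, hs, hval, hqL⟩ := maximizer_spec hlip hutx hqmax
  have hqp : ‖q - p‖ < min δ₁ (ε/2) := hC2 t x q htδ₂ hxδ₂ htT hqmax
  have hqpδ₁ : ‖q - p‖ < δ₁ := lt_of_lt_of_le hqp (min_le_left _ _)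
  have hqpε : ‖q - p‖ ≤ ε/2 := (lt_of_lt_of_le hqp (min_le_right _ _)).le
  -- uIoc bound
  have huIoc : ∀ τ ∈ Set.uIoc t₀ t, |τ - t₀| ≤ |t - t₀| := by
    intro τ hτ
    have h1 : min t₀ t < τ := hτ.1
    have h2 : τ ≤ max t₀ t := hτ.2
    have h3 : t₀ - |t - t₀| ≤ min t₀ t :=
      le_min (by linarith [abs_nonneg (t - t₀)]) (by linarith [neg_abs_le (t - t₀)])
    have h4 : max t₀ t ≤ t₀ + |t - t₀| :=
      max_le (by linarith [abs_nonneg (t - t₀)]) (by linarith [le_abs_self (t - t₀)])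
    rw [abs_le]
    constructor <;> linarith
  -- integral estimates
  have hIest : ∀ q' : EuclideanSpace ℝ (Fin n), ‖q' - p‖ < δ₁ →
      |(∫ τ in t₀..t, H τ q') - (t - t₀) * H t₀ p| ≤ ε/2 * |t - t₀| := by
    intro q' hq'
    have heq : (∫ τ in t₀..t, (H τ q' - H t₀ p)) =
        (∫ τ in t₀..t, H τ q') - (t - t₀) * H t₀ p := by
      rw [intervalIntegral.integral_sub (hInt q' t₀ t) (intervalIntegrable_const),
        intervalIntegral.integral_const, smul_eq_mul]
    rw [← heq]
    have := intervalIntegral.norm_integral_le_of_norm_le_const (C := ε/2)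
      (f := fun τ => H τ q' - H t₀ p) (a := t₀) (b := t) ?_
    · simpa [Real.norm_eq_abs] using this
    · intro τ hτ
      rw [Real.norm_eq_abs]
      exact hH2 τ q' (lt_of_le_of_lt (huIoc τ hτ) htδ₁) hq'
  have hIestp := hIest p (by simpa using hδ₁)
  have hIestq := hIest q hqpδ₁
  -- inner product estimates
  have hinner : |⟪x - x₀, q - p⟫| ≤ ‖x - x₀‖ * (ε/2) :=
    le_trans (abs_real_inner_le_norm _ _) (mul_le_mul_of_nonneg_left hqpε (norm_nonneg _))
  -- bounds via component norms
  have hdiff : ((t, x) - (t₀, x₀) : ℝ × EuclideanSpace ℝ (Fin n)) = (t - t₀, x - x₀) := rfl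
  have hnt : |t - t₀| ≤ ‖((t, x) - (t₀, x₀) : ℝ × EuclideanSpace ℝ (Fin n))‖ := by
    rw [hdiff]
    exact (Real.norm_eq_abs _ ▸ norm_fst_le ((t - t₀, x - x₀) : ℝ × EuclideanSpace ℝ (Fin n)))
  have hnx : ‖x - x₀‖ ≤ ‖((t, x) - (t₀, x₀) : ℝ × EuclideanSpace ℝ (Fin n))‖ := by
    rw [hdiff]
    exact norm_snd_le ((t - t₀, x - x₀) : ℝ × EuclideanSpace ℝ (Fin n))
  -- the linear map applied
  have hL : (((-(H t₀ p)) • (ContinuousLinearMap.fst ℝ ℝ (EuclideanSpace ℝ (Fin n))) +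
      (innerSL ℝ p).comp (ContinuousLinearMap.snd ℝ ℝ (EuclideanSpace ℝ (Fin n))))
      ((t, x) - (t₀, x₀)) : ℝ) = (-(H t₀ p) * (t - t₀) + ⟪p, x - x₀⟫ : ℝ) := by
    simp [ContinuousLinearMap.smul_apply, smul_eq_mul]
  -- two real inequalities
  have low : ⟪x, p⟫ - (∫ τ in (0:ℝ)..t, H τ p) - sp ≤ u (t, x) := by
    have := hutx.2 ⟨p, rfl⟩
    rw [phi_real hsp, EReal.coe_le_coe_iff] at this
    exact this
  have upp : ⟪x₀, q⟫ - (∫ τ in (0:ℝ)..t₀, H τ q) - s ≤ u (t₀, x₀) := by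
    have := hu₀.2 ⟨q, rfl⟩
    rw [phi_real hs, EReal.coe_le_coe_iff] at this
    exact this
  have hsubp : ⟪x, p⟫ - ⟪x₀, p⟫ = ⟪x - x₀, p⟫ := (inner_sub_left x x₀ p).symm
  have hsubq : ⟪x, q⟫ - ⟪x₀, q⟫ = ⟪x - x₀, q⟫ := (inner_sub_left x x₀ q).symm
  have hsplit : ⟪x - x₀, q⟫ = ⟪x - x₀, p⟫ + ⟪x - x₀, q - p⟫ := by
    rw [← inner_add_right]
    congr 1
    abel
  have hcomm : ⟪x - x₀, p⟫ = ⟪p, x - x₀⟫ := real_inner_comm _ _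
  have hFp := hFsub p t
  have hFq := hFsub q t
  rw [hL]
  rw [Real.norm_eq_abs, abs_le]
  have hnn : 0 ≤ ‖((t, x) - (t₀, x₀) : ℝ × EuclideanSpace ℝ (Fin n))‖ := norm_nonneg _
  have habs1 := abs_le.1 hIestp
  have habs2 := abs_le.1 hIestq
  have habs3 := abs_le.1 hinner
  have hm1 : ε/2 * |t - t₀| ≤ ε/2 * ‖((t, x) - (t₀, x₀) : ℝ × EuclideanSpace ℝ (Fin n))‖ :=
    mul_le_mul_of_nonneg_left hnt (by positivity)
  have hm2 : ‖x - x₀‖ * (ε/2) ≤ ‖((t, x) - (t₀, x₀) : ℝ × EuclideanSpace ℝ (Fin n))‖ * (ε/2) :=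
    mul_le_mul_of_nonneg_right hnx (by positivity)
  constructor
  · -- lower bound: uses low, hu₀val, hIestp
    nlinarith [habs1.1, habs1.2, hm1]
  · -- upper bound: uses hval, upp, hIestq, hinner
    nlinarith [habs2.1, habs2.2, habs3.1, habs3.2, hm1, hm2]
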